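/- (a) If v ≥ 2 and C is a nonempty 4-divisible set of points of PG(v−1, 2) (i.e., of 1-dimensional subspaces of 𝔽₂^v), then |C| ∈ {7, 8} or |C| ≥ 14. (b) Conversely, for every integer n with n ∈ {7, 8} or n ≥ 14, there exist an integer v ≥ 2 and a 4-divisible set C of points of PG(v−1, 2) with |C| = n. -/

import Mathlib

open scoped Classical

section PGDefs

variable {F : Type} [Field F] {M : Type} [AddCommGroup M] [Module F M]

/-- The number of points of `C` contained in the subspace `S`, i.e. `|C ∩ S|`. -/
noncomputable def interCard (C : Finset (Submodule F M)) (S : Submodule F M) : ℕ :=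
  (C.filter (fun P => P ≤ S)).card

/-- `H` is a hyperplane, i.e. a subspace of codimension 1. -/
def IsHyperplane (H : Submodule F M) : Prop :=
  Module.finrank F ↥H = Module.finrank F M - 1

/-- Every element of `C` is a point, i.e. a 1-dimensional subspace. -/
def IsPointSet (C : Finset (Submodule F M)) : Prop :=
  ∀ P ∈ C, Module.finrank F ↥P = 1

/-- `C` is `Δ`-divisible: `|C ∩ H| ≡ |C| (mod Δ)` for every hyperplane `H`. -/
def DivisibleSet (Δ : ℕ) (C : Finset (Submodule F M)) : Prop :=
  ∀ H : Submodule F M, IsHyperplane H → interCard C H ≡ C.card [MOD Δ]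

noncomputable instance fintypeSubmodule [Finite M] : Fintype (Submodule F M) :=
  have : Finite (Submodule F M) :=
    Finite.of_injective (fun S => (S : Set M)) SetLike.coe_injective
  Fintype.ofFinite _

end PGDefs

set_option maxRecDepth 40000

namespace FDiv

abbrev Vec (v : ℕ) := Fin v → ZMod 2

variable {v : ℕ}

/-- The standard bilinear form. -/
def dot (a x : Vec v) : ZMod 2 := ∑ i, a i * x i

lemma z2cases (c : ZMod 2) : c = 0 ∨ c = 1 := by revert c; decide

lemma vec_add_eq_zero {x y : Vec v} (h : x + y = 0) : x = y := by
  funext i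
  have h1 := congrFun h i
  have h2 : ∀ p q : ZMod 2, p + q = 0 → p = q := by decide
  exact h2 _ _ h1

/-- `dot a ·` as a linear map. -/
def lform (a : Vec v) : Vec v →ₗ[ZMod 2] ZMod 2 where
  toFun x := dot a x
  map_add' x y := by simp [dot, mul_add, Finset.sum_add_distrib]
  map_smul' c x := by
    simp only [dot, Pi.smul_apply, smul_eq_mul, Finset.mul_sum, RingHom.id_apply]
    exact Finset.sum_congr rfl fun i _ => by ring

@[simp] lemma lform_apply (a x : Vec v) : lform a x = dot a x := rfl

lemma dot_single_left (j : Fin v) (x : Vec v) : dot (Pi.single j 1) x = x j := by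
  simp [dot, Pi.single_apply, ite_mul]

lemma dot_single_right (a : Vec v) (j : Fin v) : dot a (Pi.single j 1) = a j := by
  simp [dot, Pi.single_apply, mul_ite]

lemma dot_zero_left (x : Vec v) : dot 0 x = 0 := by simp [dot]

lemma dot_zero_right (a : Vec v) : dot a 0 = 0 := by simp [dot]

lemma dot_comm (a x : Vec v) : dot a x = dot x a := by
  unfold dot
  exact Finset.sum_congr rfl fun i _ => mul_comm _ _

lemma dot_eq_zero_forall {u : Vec v} (h : ∀ a : Vec v, dot a u = 0) : u = 0 := by
  funext j
  simpa [dot_single_left] using h (Pi.single j 1)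

/-- Every linear functional is given by `dot`. -/
lemma lform_eq (f : Vec v →ₗ[ZMod 2] ZMod 2) :
    f = lform (fun i => f (Pi.single i 1)) := by
  apply LinearMap.ext; intro x
  rw [LinearMap.pi_apply_eq_sum_univ f x]
  simp only [lform_apply, dot]
  refine Finset.sum_congr rfl fun i _ => ?_
  rw [smul_eq_mul, mul_comm]
  congr 2
  funext j
  simp [Pi.single_apply, eq_comm]

lemma finrank_vec : Module.finrank (ZMod 2) (Vec v) = v := by
  rw [Module.finrank_pi]; simp

lemma isHyperplane_ker {a : Vec v} (ha : a ≠ 0) :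
    IsHyperplane (LinearMap.ker (lform a)) := by
  obtain ⟨j, hj⟩ : ∃ j, a j ≠ 0 := by
    by_contra h; push_neg at h; exact ha (funext h)
  have hj1 : a j = 1 := by
    rcases z2cases (a j) with h | h
    · exact absurd h hj
    · exact h
  have hsurj : Function.Surjective (lform a) := by
    intro c
    rcases z2cases c with rfl | rfl
    · exact ⟨0, by simp [dot]⟩
    · exact ⟨Pi.single j 1, by simp [dot_single_right, hj1]⟩
  have hrange : LinearMap.range (lform a) = ⊤ := LinearMap.range_eq_top.mpr hsurj
  have h1 := LinearMap.finrank_range_add_finrank_ker (lform a)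
  rw [hrange, finrank_top, Module.finrank_self, finrank_vec] at h1
  unfold IsHyperplane
  rw [finrank_vec]
  omega

lemma exists_lform_of_hyperplane {H : Submodule (ZMod 2) (Vec v)}
    (hH : IsHyperplane H) (hv : 1 ≤ v) :
    ∃ a : Vec v, a ≠ 0 ∧ H = LinearMap.ker (lform a) := by
  have hfr : Module.finrank (ZMod 2) ↥H = v - 1 := by
    unfold IsHyperplane at hH; rwa [finrank_vec] at hH
  have hq := H.finrank_quotient_add_finrank
  rw [finrank_vec, hfr] at hq
  have hq1 : Module.finrank (ZMod 2) (Vec v ⧸ H) = 1 := by omega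
  let b : Module.Basis (Fin 1) (ZMod 2) (Vec v ⧸ H) := Module.finBasisOfFinrankEq (ZMod 2) _ hq1
  set f : Vec v →ₗ[ZMod 2] ZMod 2 := (b.coord 0).comp H.mkQ with hf
  have hker0 : ∀ z : Vec v ⧸ H, b.coord 0 z = 0 → z = 0 := by
    intro z hz
    have hrep := b.sum_repr z
    rw [Fin.sum_univ_one] at hrep
    have hzz : b.coord 0 z = b.repr z 0 := rfl
    rw [hzz] at hz
    rw [hz, zero_smul] at hrep
    exact hrep.symm
  have hkf : H = LinearMap.ker f := by
    ext x
    simp only [LinearMap.mem_ker, hf, LinearMap.comp_apply, Submodule.mkQ_apply]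
    constructor
    · intro hx
      have hx0 : Submodule.Quotient.mk (p := H) x = 0 := (Submodule.Quotient.mk_eq_zero H).mpr hx
      rw [hx0]; simp
    · intro hx
      exact (Submodule.Quotient.mk_eq_zero H).mp (hker0 _ hx)
  have hfe : f = lform (fun i => f (Pi.single i 1)) := lform_eq f
  refine ⟨fun i => f (Pi.single i 1), ?_, by rw [hkf]; exact congrArg LinearMap.ker hfe⟩
  intro ha0
  have hft : H ≠ ⊤ := by
    intro ht
    rw [ht] at hfr
    have h2 : Module.finrank (ZMod 2) ↥(⊤ : Submodule (ZMod 2) (Vec v)) = v := by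
      rw [finrank_top, finrank_vec]
    omega
  obtain ⟨x, hx⟩ : ∃ x : Vec v, x ∉ H := by
    by_contra h; push_neg at h; exact hft (by ext y; simp [h y])
  have hfx : f x = 0 := by
    rw [hfe, ha0]; simp [dot]
  rw [hkf] at hx
  exact hx hfx

/-! ### Point sets and the `Good` predicate -/

def Wt (X : Finset (Vec v)) (a : Vec v) : ℕ := (X.filter fun x => dot a x = 1).card

def Good (v : ℕ) (X : Finset (Vec v)) : Prop :=
  (∀ x ∈ X, x ≠ 0) ∧ ∀ a : Vec v, 4 ∣ Wt X a

noncomputable def toC (X : Finset (Vec v)) : Finset (Submodule (ZMod 2) (Vec v)) :=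
  X.image fun x => Submodule.span (ZMod 2) {x}

lemma span_inj {x y : Vec v} (hx : x ≠ 0)
    (h : Submodule.span (ZMod 2) {x} = Submodule.span (ZMod 2) {y}) : x = y := by
  have hxmem : x ∈ Submodule.span (ZMod 2) {y} := by
    rw [← h]; exact Submodule.mem_span_singleton_self x
  rw [Submodule.mem_span_singleton] at hxmem
  obtain ⟨c, hc⟩ := hxmem
  rcases z2cases c with rfl | rfl
  · rw [zero_smul] at hc; exact absurd hc.symm hx
  · rw [one_smul] at hc; exact hc.symm

lemma card_toC (X : Finset (Vec v)) (hX : ∀ x ∈ X, x ≠ 0) : (toC X).card = X.card := by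
  apply Finset.card_image_of_injOn
  intro x hx y hy h
  exact span_inj (hX x hx) h

lemma pointset_toC (X : Finset (Vec v)) (hX : ∀ x ∈ X, x ≠ 0) : IsPointSet (toC X) := by
  intro P hP
  rw [toC, Finset.mem_image] at hP
  obtain ⟨x, hx, rfl⟩ := hP
  exact finrank_span_singleton (hX x hx)

lemma interCard_toC (X : Finset (Vec v)) (hX : ∀ x ∈ X, x ≠ 0) (a : Vec v) :
    interCard (toC X) (LinearMap.ker (lform a)) = (X.filter fun x => dot a x = 0).card := by
  unfold interCard toC
  rw [Finset.filter_image]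
  rw [Finset.card_image_of_injOn (fun x hx y hy h =>
    span_inj (hX x (Finset.mem_of_mem_filter x hx)) h)]
  congr 1
  apply Finset.filter_congr
  intro x _
  rw [Submodule.span_singleton_le_iff_mem, LinearMap.mem_ker, lform_apply]

lemma wt_compl (X : Finset (Vec v)) (a : Vec v) :
    (X.filter fun x => dot a x = 0).card + Wt X a = X.card := by
  unfold Wt
  have h1 : (X.filter fun x => dot a x = 1) = (X.filter fun x => ¬ dot a x = 0) := by
    apply Finset.filter_congr
    intro x _
    have : ∀ u : ZMod 2, (u = 1) ↔ ¬ u = 0 := by decide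
    exact (this _)
  rw [h1]
  exact Finset.card_filter_add_card_filter_not _

lemma good_toC {X : Finset (Vec v)} (hv : 2 ≤ v) (h : Good v X) :
    IsPointSet (toC X) ∧ DivisibleSet 4 (toC X) ∧ (toC X).card = X.card := by
  refine ⟨pointset_toC X h.1, ?_, card_toC X h.1⟩
  intro H hH
  obtain ⟨a, ha, rfl⟩ := exists_lform_of_hyperplane hH (by omega)
  rw [interCard_toC X h.1 a, card_toC X h.1]
  have h1 := wt_compl X a
  have h2 := h.2 a
  unfold Nat.ModEq
  omega

lemma good_of_divisible {C : Finset (Submodule (ZMod 2) (Vec v))} (hv : 2 ≤ v)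
    (hC : IsPointSet C) (hdiv : DivisibleSet 4 C) :
    ∃ X : Finset (Vec v), Good v X ∧ X.card = C.card := by
  have hex : ∀ P ∈ C, ∃ x : Vec v, x ≠ 0 ∧ P = Submodule.span (ZMod 2) {x} := by
    intro P hP
    have h1 : Module.finrank (ZMod 2) ↥P = 1 := hC P hP
    have hPbot : P ≠ ⊥ := by
      intro h; rw [h] at h1; simp [finrank_bot] at h1
    obtain ⟨x, hxP, hx0⟩ := Submodule.exists_mem_ne_zero_of_ne_bot hPbot
    refine ⟨x, hx0, ?_⟩
    have hle : Submodule.span (ZMod 2) {x} ≤ P := by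
      rw [Submodule.span_singleton_le_iff_mem]; exact hxP
    exact (Submodule.eq_of_le_of_finrank_eq hle
      (by rw [finrank_span_singleton hx0, h1])).symm
  choose g hg0 hgspan using hex
  set X : Finset (Vec v) := C.attach.image (fun P => g P.1 P.2) with hXdef
  have hinj : Set.InjOn (fun P : {x // x ∈ C} => g P.1 P.2) ↑C.attach := by
    intro P _ Q _ h
    have h' : g P.1 P.2 = g Q.1 Q.2 := h
    apply Subtype.ext
    rw [hgspan P.1 P.2, hgspan Q.1 Q.2, h']
  have hcard : X.card = C.card := by
    rw [hXdef, Finset.card_image_of_injOn hinj, Finset.card_attach]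
  have hX0 : ∀ x ∈ X, x ≠ 0 := by
    intro x hx
    rw [hXdef, Finset.mem_image] at hx
    obtain ⟨P, _, rfl⟩ := hx
    exact hg0 P.1 P.2
  have hCX : C = toC X := by
    ext S
    constructor
    · intro hS
      rw [toC, Finset.mem_image]
      refine ⟨g S hS, ?_, (hgspan S hS).symm⟩
      rw [hXdef, Finset.mem_image]
      exact ⟨⟨S, hS⟩, Finset.mem_attach _ _, rfl⟩
    · intro hS
      rw [toC, Finset.mem_image] at hS
      obtain ⟨x, hx, rfl⟩ := hS
      rw [hXdef, Finset.mem_image] at hx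
      obtain ⟨P, _, rfl⟩ := hx
      rw [← hgspan P.1 P.2]
      exact P.2
  refine ⟨X, ⟨hX0, ?_⟩, hcard⟩
  intro a
  by_cases ha : a = 0
  · have : Wt X a = 0 := by
      unfold Wt
      rw [Finset.filter_false_of_mem, Finset.card_empty]
      intro x _
      rw [ha, dot_zero_left]
      decide
    rw [this]
    exact dvd_zero 4
  · have hd := hdiv _ (isHyperplane_ker ha)
    rw [hCX] at hd
    rw [interCard_toC X hX0 a, card_toC X hX0] at hd
    have h1 := wt_compl X a
    unfold Nat.ModEq at hd
    omega

/-! ### The fiber-counting lemma -/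

lemma card_pattern {m : ℕ} (g : Fin m → Vec v)
    (hli : ∀ c : Fin m → ZMod 2, ∑ i, c i • g i = 0 → c = 0) (pat : Fin m → ZMod 2) :
    (Finset.univ.filter fun a : Vec v => ∀ i, dot a (g i) = pat i).card * 2 ^ m = 2 ^ v := by
  set φ : Vec v →ₗ[ZMod 2] (Fin m → ZMod 2) := LinearMap.pi (fun i => lform (g i)) with hphi
  have hphiap : ∀ (a : Vec v) (i : Fin m), φ a i = dot a (g i) := by
    intro a i
    rw [hphi]
    simp only [LinearMap.pi_apply, lform_apply]
    exact dot_comm (g i) a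
  have hsurj : Function.Surjective φ := by
    rw [← LinearMap.range_eq_top]
    by_contra hne
    have hlt : LinearMap.range φ < ⊤ := lt_top_iff_ne_top.mpr hne
    obtain ⟨ε, hε0, hεmap⟩ := Submodule.exists_dual_map_eq_bot_of_lt_top hlt inferInstance
    have hker : ∀ a : Vec v, ε (φ a) = 0 := by
      intro a
      have hmem : ε (φ a) ∈ (LinearMap.range φ).map ε :=
        Submodule.mem_map_of_mem ⟨a, rfl⟩
      rw [hεmap] at hmem
      exact (Submodule.mem_bot _).mp hmem
    have hεe := lform_eq ε
    set e : Fin m → ZMod 2 := fun i => ε (Pi.single i 1) with he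
    have hu : ∀ a : Vec v, dot a (∑ i, e i • g i) = 0 := by
      intro a
      have h1 : lform a (∑ i, e i • g i) = ∑ i, e i * (φ a i) := by
        rw [map_sum]
        refine Finset.sum_congr rfl fun i _ => ?_
        rw [map_smul, smul_eq_mul, hphiap a i, lform_apply]
      have h2 : ε (φ a) = ∑ i, e i * (φ a i) := by
        conv_lhs => rw [hεe]
        simp only [lform_apply, dot]
      rw [← lform_apply, h1, ← h2, hker a]
    have he0 : e = 0 := hli e (dot_eq_zero_forall hu)
    apply hε0
    rw [hεe, he0]
    apply LinearMap.ext; intro x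
    simp [dot_zero_left]
  have hfib : ∀ w : Fin m → ZMod 2,
      (Finset.univ.filter fun a : Vec v => φ a = w).card =
      (Finset.univ.filter fun a : Vec v => φ a = 0).card := by
    intro w
    obtain ⟨a0, ha0⟩ := hsurj w
    apply Finset.card_bij' (fun a _ => a - a0) (fun b _ => b + a0)
    · intro a ha
      simp only [Finset.mem_filter, Finset.mem_univ, true_and] at ha ⊢
      rw [map_sub, ha, ha0, sub_self]
    · intro b hb
      simp only [Finset.mem_filter, Finset.mem_univ, true_and] at hb ⊢
      rw [map_add, hb, ha0, zero_add]
    · intro a _; simp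
    · intro b _; simp
  have htotal : (Finset.univ : Finset (Vec v)).card =
      ∑ w : Fin m → ZMod 2, (Finset.univ.filter fun a : Vec v => φ a = w).card := by
    exact Finset.card_eq_sum_card_fiberwise (fun x _ => Finset.mem_univ (φ x))
  have hcardV : (Finset.univ : Finset (Vec v)).card = 2 ^ v := by
    rw [Finset.card_univ, Fintype.card_fun]
    simp
  have hcardW : (Finset.univ : Finset (Fin m → ZMod 2)).card = 2 ^ m := by
    rw [Finset.card_univ, Fintype.card_fun]
    simp
  have hpred : (Finset.univ.filter fun a : Vec v => ∀ i, dot a (g i) = pat i) =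
      (Finset.univ.filter fun a : Vec v => φ a = pat) := by
    apply Finset.filter_congr
    intro a _
    constructor
    · intro h; funext i; rw [hphiap]; exact h i
    · intro h i; rw [← hphiap, h]
  rw [hpred, hfib pat]
  have h2 : ∑ w : Fin m → ZMod 2, (Finset.univ.filter fun a : Vec v => φ a = w).card =
      2 ^ m * (Finset.univ.filter fun a : Vec v => φ a = 0).card := by
    rw [Finset.sum_congr rfl (fun w _ => hfib w), Finset.sum_const, ← hcardW]
    simp [mul_comm]
  rw [← hcardV, htotal, h2, mul_comm]

/-! ### Linear independence of small families -/

lemma li_one {x : Vec v} (hx : x ≠ 0) :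
    ∀ c : Fin 1 → ZMod 2, ∑ i, c i • (![x] : Fin 1 → Vec v) i = 0 → c = 0 := by
  intro c hc
  rw [Fin.sum_univ_one] at hc
  simp only [Matrix.cons_val_zero] at hc
  rcases z2cases (c 0) with h0 | h0
  · funext i
    have : i = 0 := Subsingleton.elim _ _
    rw [this, h0]; rfl
  · rw [h0, one_smul] at hc
    exact absurd hc hx

lemma li_two {x y : Vec v} (hx : x ≠ 0) (hy : y ≠ 0) (hxy : x ≠ y) :
    ∀ c : Fin 2 → ZMod 2, ∑ i, c i • (![x, y] : Fin 2 → Vec v) i = 0 → c = 0 := by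
  intro c hc
  rw [Fin.sum_univ_two] at hc
  simp only [Matrix.cons_val_zero, Matrix.cons_val_one, Matrix.head_cons] at hc
  rcases z2cases (c 0) with h0 | h0 <;> rcases z2cases (c 1) with h1 | h1
  · funext i; fin_cases i <;> simp [h0, h1]
  · rw [h0, h1, zero_smul, one_smul, zero_add] at hc
    exact absurd hc hy
  · rw [h0, h1, zero_smul, one_smul, add_zero] at hc
    exact absurd hc hx
  · rw [h0, h1, one_smul, one_smul] at hc
    exact absurd (vec_add_eq_zero hc) hxy

lemma li_three {x y z : Vec v} (hx : x ≠ 0) (hy : y ≠ 0) (hz : z ≠ 0)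
    (hxy : x ≠ y) (hxz : x ≠ z) (hyz : y ≠ z) (hs : x + y + z ≠ 0) :
    ∀ c : Fin 3 → ZMod 2, ∑ i, c i • (![x, y, z] : Fin 3 → Vec v) i = 0 → c = 0 := by
  intro c hc
  rw [Fin.sum_univ_three] at hc
  simp only [Matrix.cons_val_zero, Matrix.cons_val_one, Matrix.head_cons,
    Matrix.cons_val_two, Matrix.tail_cons] at hc
  rcases z2cases (c 0) with h0 | h0 <;> rcases z2cases (c 1) with h1 | h1 <;>
    rcases z2cases (c 2) with h2 | h2 <;>
    rw [h0, h1, h2] at hc <;>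
    simp only [zero_smul, one_smul, zero_add, add_zero] at hc
  · funext i; fin_cases i <;> simp [h0, h1, h2]
  · exact absurd hc hz
  · exact absurd hc hy
  · exact absurd (vec_add_eq_zero hc) hyz
  · exact absurd hc hx
  · exact absurd (vec_add_eq_zero hc) hxz
  · exact absurd (vec_add_eq_zero hc) hxy
  · exact absurd hc hs

/-! ### Moment sums -/

def Ba (X : Finset (Vec v)) (a : Vec v) : ℕ :=
  (X.offDiag.filter fun p => dot a p.1 = 1 ∧ dot a p.2 = 1).card

def T3 (X : Finset (Vec v)) : Finset (Vec v × Vec v × Vec v) :=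
  ((X ×ˢ X ×ˢ X).filter fun p => p.1 ≠ p.2.1 ∧ p.1 ≠ p.2.2 ∧ p.2.1 ≠ p.2.2)

def Ca (X : Finset (Vec v)) (a : Vec v) : ℕ :=
  ((T3 X).filter fun p => dot a p.1 = 1 ∧ dot a p.2.1 = 1 ∧ dot a p.2.2 = 1).card

lemma Ba_eq (X : Finset (Vec v)) (a : Vec v) :
    Ba X a = Wt X a * Wt X a - Wt X a := by
  unfold Ba Wt
  have h : X.offDiag.filter (fun p => dot a p.1 = 1 ∧ dot a p.2 = 1) =
      (X.filter fun x => dot a x = 1).offDiag := by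
    ext p
    simp only [Finset.mem_filter, Finset.mem_offDiag]
    tauto
  rw [h, Finset.offDiag_card]

lemma triple_card {α : Type*} [DecidableEq α] (S : Finset α) :
    ((S ×ˢ S ×ˢ S).filter fun p => p.1 ≠ p.2.1 ∧ p.1 ≠ p.2.2 ∧ p.2.1 ≠ p.2.2).card =
      S.card * ((S.card - 1) * (S.card - 1) - (S.card - 1)) := by
  set T := ((S ×ˢ S ×ˢ S).filter fun p => p.1 ≠ p.2.1 ∧ p.1 ≠ p.2.2 ∧ p.2.1 ≠ p.2.2) with hT
  have hmem : ∀ p ∈ T, (p : α × α × α).1 ∈ S := by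
    intro p hp
    rw [hT, Finset.mem_filter, Finset.mem_product] at hp
    exact hp.1.1
  rw [Finset.card_eq_sum_card_fiberwise hmem]
  have hfib : ∀ x ∈ S, (T.filter fun p => p.1 = x).card = (S.erase x).offDiag.card := by
    intro x hx
    refine Finset.card_bij' (fun p _ => p.2) (fun q _ => (x, q)) ?_ ?_ ?_ ?_
    · intro p hp
      rw [Finset.mem_filter, hT, Finset.mem_filter, Finset.mem_product,
        Finset.mem_product] at hp
      obtain ⟨⟨⟨h1, h2, h3⟩, hne1, hne2, hne3⟩, hfst⟩ := hp
      rw [Finset.mem_offDiag]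
      refine ⟨Finset.mem_erase.mpr ⟨?_, h2⟩, Finset.mem_erase.mpr ⟨?_, h3⟩, hne3⟩
      · show p.2.1 ≠ x
        exact fun h => hne1 (hfst.trans h.symm)
      · show p.2.2 ≠ x
        exact fun h => hne2 (hfst.trans h.symm)
    · intro q hq
      rw [Finset.mem_offDiag] at hq
      obtain ⟨hq1, hq2, hq3⟩ := hq
      rw [Finset.mem_filter, hT, Finset.mem_filter, Finset.mem_product, Finset.mem_product]
      refine ⟨⟨⟨hx, Finset.mem_of_mem_erase hq1, Finset.mem_of_mem_erase hq2⟩,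
        ?_, ?_, hq3⟩, rfl⟩
      · exact fun h => (Finset.mem_erase.mp hq1).1 h.symm
      · exact fun h => (Finset.mem_erase.mp hq2).1 h.symm
    · intro p hp
      rw [Finset.mem_filter] at hp
      obtain ⟨-, hfst⟩ := hp
      exact Prod.ext hfst.symm rfl
    · intro q _; rfl
  rw [Finset.sum_congr rfl hfib]
  have hod : ∀ x ∈ S, (S.erase x).offDiag.card =
      (S.card - 1) * (S.card - 1) - (S.card - 1) := by
    intro x hx
    rw [Finset.offDiag_card, Finset.card_erase_of_mem hx]
  rw [Finset.sum_congr rfl hod, Finset.sum_const, smul_eq_mul]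

lemma Ca_eq (X : Finset (Vec v)) (a : Vec v) :
    Ca X a = Wt X a * ((Wt X a - 1) * (Wt X a - 1) - (Wt X a - 1)) := by
  unfold Ca Wt
  have h : (T3 X).filter (fun p => dot a p.1 = 1 ∧ dot a p.2.1 = 1 ∧ dot a p.2.2 = 1) =
      (((X.filter fun x => dot a x = 1) ×ˢ (X.filter fun x => dot a x = 1) ×ˢ
        (X.filter fun x => dot a x = 1)).filter fun p =>
          p.1 ≠ p.2.1 ∧ p.1 ≠ p.2.2 ∧ p.2.1 ≠ p.2.2) := by
    ext p
    simp only [T3, Finset.mem_filter, Finset.mem_product]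
    tauto
  rw [h, triple_card]

lemma filt1 (x : Vec v) :
    (Finset.univ.filter fun a : Vec v => ∀ i, dot a ((![x] : Fin 1 → Vec v) i) =
      (![1] : Fin 1 → ZMod 2) i) = (Finset.univ.filter fun a : Vec v => dot a x = 1) := by
  apply Finset.filter_congr
  intro a _
  constructor
  · intro h; exact h 0
  · intro h i; fin_cases i; exact h

lemma filt2 (x y : Vec v) :
    (Finset.univ.filter fun a : Vec v => ∀ i, dot a ((![x, y] : Fin 2 → Vec v) i) =
      (![1, 1] : Fin 2 → ZMod 2) i) =
    (Finset.univ.filter fun a : Vec v => dot a x = 1 ∧ dot a y = 1) := by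
  apply Finset.filter_congr
  intro a _
  constructor
  · intro h; exact ⟨h 0, h 1⟩
  · rintro ⟨h1, h2⟩ i; fin_cases i
    · exact h1
    · exact h2

lemma filt3 (x y z : Vec v) :
    (Finset.univ.filter fun a : Vec v => ∀ i, dot a ((![x, y, z] : Fin 3 → Vec v) i) =
      (![1, 1, 1] : Fin 3 → ZMod 2) i) =
    (Finset.univ.filter fun a : Vec v => dot a x = 1 ∧ dot a y = 1 ∧ dot a z = 1) := by
  apply Finset.filter_congr
  intro a _
  constructor
  · intro h; exact ⟨h 0, h 1, h 2⟩
  · rintro ⟨h1, h2, h3⟩ i; fin_cases i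
    · exact h1
    · exact h2
    · exact h3

section Moments

variable (X : Finset (Vec v)) (hX0 : ∀ x ∈ X, x ≠ 0)

lemma sumA (hX0 : ∀ x ∈ X, x ≠ 0) :
    2 * ∑ a : Vec v, Wt X a = X.card * 2 ^ v := by
  have h1 : ∑ a : Vec v, Wt X a =
      ∑ x ∈ X, (Finset.univ.filter fun a : Vec v => dot a x = 1).card := by
    unfold Wt
    rw [Finset.sum_congr rfl (fun a _ => Finset.card_filter _ X)]
    rw [Finset.sum_comm]
    refine Finset.sum_congr rfl fun x _ => ?_
    rw [Finset.card_filter]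
  rw [h1, Finset.mul_sum]
  have h2 : ∀ x ∈ X, 2 * (Finset.univ.filter fun a : Vec v => dot a x = 1).card = 2 ^ v := by
    intro x hx
    have := card_pattern (![x]) (li_one (hX0 x hx)) (![1])
    rw [filt1] at this
    rw [mul_comm]
    simpa using this
  rw [Finset.sum_congr rfl h2, Finset.sum_const, smul_eq_mul]

lemma sumB (hX0 : ∀ x ∈ X, x ≠ 0) :
    4 * ∑ a : Vec v, Ba X a = (X.card * X.card - X.card) * 2 ^ v := by
  have h1 : ∑ a : Vec v, Ba X a = ∑ p ∈ X.offDiag,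
      (Finset.univ.filter fun a : Vec v => dot a p.1 = 1 ∧ dot a p.2 = 1).card := by
    unfold Ba
    rw [Finset.sum_congr rfl (fun a _ => Finset.card_filter _ X.offDiag)]
    rw [Finset.sum_comm]
    refine Finset.sum_congr rfl fun p _ => ?_
    rw [Finset.card_filter]
  rw [h1, Finset.mul_sum]
  have h2 : ∀ p ∈ X.offDiag, 4 *
      (Finset.univ.filter fun a : Vec v => dot a p.1 = 1 ∧ dot a p.2 = 1).card = 2 ^ v := by
    intro p hp
    rw [Finset.mem_offDiag] at hp
    have := card_pattern (![p.1, p.2])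
      (li_two (hX0 p.1 hp.1) (hX0 p.2 hp.2.1) hp.2.2) (![1, 1])
    rw [filt2] at this
    rw [mul_comm]
    simpa using this
  rw [Finset.sum_congr rfl h2, Finset.sum_const, smul_eq_mul, Finset.offDiag_card]

lemma sumC (hX0 : ∀ x ∈ X, x ≠ 0) :
    8 * ∑ a : Vec v, Ca X a ≤
      (X.card * ((X.card - 1) * (X.card - 1) - (X.card - 1))) * 2 ^ v := by
  have h1 : ∑ a : Vec v, Ca X a = ∑ p ∈ T3 X,
      (Finset.univ.filter fun a : Vec v =>
        dot a p.1 = 1 ∧ dot a p.2.1 = 1 ∧ dot a p.2.2 = 1).card := by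
    unfold Ca
    rw [Finset.sum_congr rfl (fun a _ => Finset.card_filter _ (T3 X))]
    rw [Finset.sum_comm]
    refine Finset.sum_congr rfl fun p _ => ?_
    rw [Finset.card_filter]
  rw [h1, Finset.mul_sum]
  have h2 : ∀ p ∈ T3 X, 8 * (Finset.univ.filter fun a : Vec v =>
      dot a p.1 = 1 ∧ dot a p.2.1 = 1 ∧ dot a p.2.2 = 1).card ≤ 2 ^ v := by
    intro p hp
    rw [T3, Finset.mem_filter, Finset.mem_product, Finset.mem_product] at hp
    obtain ⟨⟨hp1, hp2, hp3⟩, hne1, hne2, hne3⟩ := hp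
    by_cases hdep : p.1 + p.2.1 + p.2.2 = 0
    · have hempty : (Finset.univ.filter fun a : Vec v =>
          dot a p.1 = 1 ∧ dot a p.2.1 = 1 ∧ dot a p.2.2 = 1) = ∅ := by
        rw [Finset.filter_eq_empty_iff]
        rintro a - ⟨h1, h2, h3⟩
        have : dot a (p.1 + p.2.1 + p.2.2) = 1 + 1 + 1 := by
          rw [← lform_apply, map_add, map_add, lform_apply, lform_apply, lform_apply,
            h1, h2, h3]
        rw [hdep, dot_zero_right] at this
        exact absurd this.symm (by decide)
      rw [hempty]
      simp
    · have := card_pattern (![p.1, p.2.1, p.2.2])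
        (li_three (hX0 _ hp1) (hX0 _ hp2) (hX0 _ hp3) hne1 hne2 hne3 hdep) (![1, 1, 1])
      rw [filt3] at this
      rw [mul_comm]
      exact le_of_eq (by simpa using this)
  calc ∑ p ∈ T3 X, 8 * (Finset.univ.filter fun a : Vec v =>
        dot a p.1 = 1 ∧ dot a p.2.1 = 1 ∧ dot a p.2.2 = 1).card
      ≤ ∑ _p ∈ T3 X, 2 ^ v := Finset.sum_le_sum h2
    _ = (X.card * ((X.card - 1) * (X.card - 1) - (X.card - 1))) * 2 ^ v := by
        rw [Finset.sum_const, smul_eq_mul]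
        congr 1
        exact triple_card X

end Moments

/-! ### Pointwise inequalities -/

lemma point1 {X : Finset (Vec v)} {a : Vec v} (h4 : 4 ∣ Wt X a) :
    3 * Wt X a ≤ Ba X a := by
  rw [Ba_eq]
  generalize h : Wt X a = W at h4 ⊢
  have hc : W = 0 ∨ W = 4 ∨ W = 8 ∨ 12 ≤ W := by omega
  rcases hc with rfl | rfl | rfl | hge
  · simp
  · norm_num
  · norm_num
  · have h1 : 12 * W ≤ W * W := Nat.mul_le_mul_right W hge
    omega

lemma point2 {X : Finset (Vec v)} {a : Vec v} (h4 : 4 ∣ Wt X a) :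
    11 * Wt X a ≤ Ba X a + 32 := by
  rw [Ba_eq]
  generalize h : Wt X a = W at h4 ⊢
  have hc : W = 0 ∨ W = 4 ∨ W = 8 ∨ 12 ≤ W := by omega
  rcases hc with rfl | rfl | rfl | hge
  · simp
  · norm_num
  · norm_num
  · have h1 : 12 * W ≤ W * W := Nat.mul_le_mul_right W hge
    omega

lemma point3 {X : Finset (Vec v)} {a : Vec v} (h4 : 4 ∣ Wt X a) :
    9 * Ba X a ≤ Ca X a + 21 * Wt X a := by
  rw [Ba_eq, Ca_eq]
  generalize h : Wt X a = W at h4 ⊢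
  have hc : W = 0 ∨ W = 4 ∨ W = 8 ∨ 12 ≤ W := by omega
  rcases hc with rfl | rfl | rfl | hge
  · simp
  · norm_num
  · norm_num
  · obtain ⟨k, rfl⟩ : ∃ k, W = k + 12 := ⟨W - 12, by omega⟩
    have e1 : (k + 12) * (k + 12) - (k + 12) = k * k + 23 * k + 132 :=
      Nat.sub_eq_of_eq_add (by ring)
    have e2 : (k + 12 - 1) * (k + 12 - 1) - (k + 12 - 1) = k * k + 21 * k + 110 := by
      have : k + 12 - 1 = k + 11 := by omega
      rw [this]
      exact Nat.sub_eq_of_eq_add (by ring)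
    rw [e1, e2]
    nlinarith [Nat.zero_le (k * k * k), Nat.zero_le k, Nat.zero_le (k * k)]

/-! ### The cardinality bound -/

theorem card_bound {X : Finset (Vec v)} (hv : 2 ≤ v) (hX0 : ∀ x ∈ X, x ≠ 0)
    (hW : ∀ a : Vec v, 4 ∣ Wt X a) (hne : X.Nonempty) :
    X.card = 7 ∨ X.card = 8 ∨ 14 ≤ X.card := by
  set n := X.card with hn
  set E := 2 ^ v with hE
  have hEpos : 0 < E := by rw [hE]; positivity
  set A := ∑ a : Vec v, Wt X a with hA
  set B := ∑ a : Vec v, Ba X a with hB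
  set Cc := ∑ a : Vec v, Ca X a with hC
  have hA2 : 2 * A = n * E := sumA X hX0
  have hB4 : 4 * B = (n * n - n) * E := sumB X hX0
  have hC8 : 8 * Cc ≤ (n * ((n - 1) * (n - 1) - (n - 1))) * E := sumC X hX0
  have hq1 : 3 * A ≤ B := by
    rw [hA, hB, Finset.mul_sum]
    exact Finset.sum_le_sum fun a _ => point1 (hW a)
  have hq2 : 11 * A ≤ B + 32 * E := by
    have h1 : ∑ a : Vec v, 11 * Wt X a ≤ ∑ a : Vec v, (Ba X a + 32) :=
      Finset.sum_le_sum fun a _ => point2 (hW a)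
    rw [Finset.sum_add_distrib, Finset.sum_const, smul_eq_mul] at h1
    have h2 : (Finset.univ : Finset (Vec v)).card = E := by
      rw [Finset.card_univ, Fintype.card_fun, hE]; simp
    rw [h2, mul_comm E 32] at h1
    rw [hA, Finset.mul_sum]
    exact h1
  have hq3 : 9 * B ≤ Cc + 21 * A := by
    have h1 : ∑ a : Vec v, 9 * Ba X a ≤ ∑ a : Vec v, (Ca X a + 21 * Wt X a) :=
      Finset.sum_le_sum fun a _ => point3 (hW a)
    rw [Finset.sum_add_distrib] at h1
    rw [hB, hC, hA, Finset.mul_sum, Finset.mul_sum]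
    exact h1
  -- derive the three clean numeric inequalities
  have k1 : 6 * n ≤ n * n - n := by
    have e1 : (6 * n) * E = 12 * A := by
      rw [mul_assoc, ← hA2]; ring
    have e2 : 12 * A ≤ 4 * B := by omega
    have e3 : (6 * n) * E ≤ (n * n - n) * E := by
      rw [e1, ← hB4]; exact e2
    exact Nat.le_of_mul_le_mul_right e3 hEpos
  have k2 : 22 * n ≤ n * n - n + 128 := by
    have e1 : (22 * n) * E = 44 * A := by
      rw [mul_assoc, ← hA2]; ring
    have e2 : 44 * A ≤ 4 * B + 128 * E := by omega
    have e3 : (22 * n) * E ≤ (n * n - n + 128) * E := by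
      rw [e1, Nat.add_mul, ← hB4]; exact e2
    exact Nat.le_of_mul_le_mul_right e3 hEpos
  have k3 : 18 * (n * n - n) ≤ n * ((n - 1) * (n - 1) - (n - 1)) + 84 * n := by
    have e2 : 72 * B ≤ 8 * Cc + 168 * A := by omega
    have e3 : (18 * (n * n - n)) * E = 72 * B := by
      rw [mul_assoc, ← hB4]; ring
    have e4 : (84 * n) * E = 168 * A := by
      rw [mul_assoc, ← hA2]; ring
    have e5 : (18 * (n * n - n)) * E ≤
        (n * ((n - 1) * (n - 1) - (n - 1)) + 84 * n) * E := by
      rw [e3, Nat.add_mul, e4]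
      omega
    exact Nat.le_of_mul_le_mul_right e5 hEpos
  have hn1 : 1 ≤ n := Finset.card_pos.mpr hne
  clear hA2 hB4 hC8 hq1 hq2 hq3 hEpos
  clear_value n E A B Cc
  clear hE hA hB hC hn
  have hn7 : 7 ≤ n := by
    by_contra hlt
    push_neg at hlt
    interval_cases n <;> omega
  by_contra hcon
  push_neg at hcon
  obtain ⟨h7, h8, h14⟩ := hcon
  have hlo : 9 ≤ n := by omega
  have hhi : n ≤ 13 := by omega
  interval_cases n <;> omega

/-! ### Explicit building blocks -/

def X7 : Finset (Vec 3) := {![1,0,0], ![0,1,0], ![1,1,0], ![0,0,1], ![1,0,1], ![0,1,1], ![1,1,1]}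
def X8 : Finset (Vec 4) := {![0,0,0,1], ![1,0,0,1], ![0,1,0,1], ![1,1,0,1], ![0,0,1,1], ![1,0,1,1], ![0,1,1,1], ![1,1,1,1]}
def X17 : Finset (Vec 6) := {![1,0,0,0,0,0], ![0,1,0,0,0,0], ![1,1,0,0,0,0], ![0,0,1,0,0,0], ![0,1,1,0,0,0], ![0,0,0,1,0,0], ![1,1,1,1,0,0], ![0,0,0,0,1,0], ![1,0,1,0,1,0], ![0,0,0,0,0,1], ![1,1,1,0,0,1], ![0,1,0,1,0,1], ![1,1,0,1,0,1], ![1,0,1,1,0,1], ![0,1,1,1,0,1], ![1,0,0,1,1,1], ![0,0,1,1,1,1]}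
def X18 : Finset (Vec 7) := {![1,0,0,0,0,0,0], ![0,1,0,0,0,0,0], ![0,0,1,0,0,0,0], ![0,0,0,1,0,0,0], ![0,0,0,0,1,0,0], ![1,1,1,0,1,0,0], ![0,0,0,0,0,1,0], ![1,0,1,1,0,1,0], ![1,1,0,0,1,1,0], ![0,1,1,0,1,1,0], ![0,0,0,0,0,0,1], ![1,0,1,0,0,0,1], ![1,1,1,0,1,0,1], ![0,1,0,1,1,0,1], ![0,1,0,0,0,1,1], ![1,0,1,0,0,1,1], ![0,0,0,0,1,1,1], ![1,1,1,1,1,1,1]}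
def X19 : Finset (Vec 7) := {![1,0,0,0,0,0,0], ![0,1,0,0,0,0,0], ![0,0,1,0,0,0,0], ![0,0,0,1,0,0,0], ![1,0,0,1,0,0,0], ![0,0,0,0,1,0,0], ![1,1,1,0,1,0,0], ![0,0,0,0,0,1,0], ![1,0,1,0,0,1,0], ![0,1,0,1,0,1,0], ![0,1,1,1,0,1,0], ![0,0,0,0,0,0,1], ![0,1,1,0,0,0,1], ![0,1,0,1,1,0,1], ![1,0,1,1,1,0,1], ![1,0,1,0,0,1,1], ![0,1,1,0,0,1,1], ![1,0,0,1,0,1,1], ![1,1,0,1,0,1,1]}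
def X20 : Finset (Vec 7) := {![1,0,0,0,0,0,0], ![0,1,0,0,0,0,0], ![0,0,1,0,0,0,0], ![0,0,0,1,0,0,0], ![0,0,0,0,1,0,0], ![0,0,0,1,1,0,0], ![0,0,1,1,1,0,0], ![0,1,1,1,1,0,0], ![0,0,0,0,0,1,0], ![1,0,0,0,0,1,0], ![0,1,0,0,1,1,0], ![0,1,1,0,1,1,0], ![0,0,0,0,0,0,1], ![1,1,1,0,0,0,1], ![0,0,0,1,0,0,1], ![0,1,0,1,0,0,1], ![1,1,1,0,0,1,1], ![0,0,1,1,0,1,1], ![0,1,0,0,1,1,1], ![0,0,1,1,1,1,1]}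

lemma good7 : Good 3 X7 ∧ X7.card = 7 := by unfold Good; decide

lemma good8 : Good 4 X8 ∧ X8.card = 8 := by unfold Good; decide

lemma good17 : Good 6 X17 ∧ X17.card = 17 := by unfold Good; decide

lemma good18 : Good 7 X18 ∧ X18.card = 18 := by unfold Good; decide

lemma good19 : Good 7 X19 ∧ X19.card = 19 := by unfold Good; decide

lemma good20 : Good 7 X20 ∧ X20.card = 20 := by unfold Good; decide

/-! ### Direct sums of divisible sets -/

def padL {v1 v2 : ℕ} (x : Vec v1) : Vec (v1 + v2) := Fin.append x (0 : Vec v2)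

def padR {v1 v2 : ℕ} (y : Vec v2) : Vec (v1 + v2) := Fin.append (0 : Vec v1) y

lemma dot_padL {v1 v2 : ℕ} (a : Vec (v1 + v2)) (x : Vec v1) :
    dot a (padL (v2 := v2) x) = dot (fun i => a (Fin.castAdd v2 i)) x := by
  unfold dot padL
  rw [Fin.sum_univ_add]
  have h2 : ∀ j : Fin v2, a (Fin.natAdd v1 j) *
      (Fin.append x (0 : Vec v2)) (Fin.natAdd v1 j) = 0 := by
    intro j
    rw [Fin.append_right]
    simp
  rw [Finset.sum_congr rfl (fun j _ => h2 j), Finset.sum_const_zero, add_zero]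
  refine Finset.sum_congr rfl fun i _ => ?_
  rw [Fin.append_left]

lemma dot_padR {v1 v2 : ℕ} (a : Vec (v1 + v2)) (y : Vec v2) :
    dot a (padR (v1 := v1) y) = dot (fun j => a (Fin.natAdd v1 j)) y := by
  unfold dot padR
  rw [Fin.sum_univ_add]
  have h1 : ∀ i : Fin v1, a (Fin.castAdd v2 i) *
      (Fin.append (0 : Vec v1) y) (Fin.castAdd v2 i) = 0 := by
    intro i
    rw [Fin.append_left]
    simp
  rw [Finset.sum_congr rfl (fun i _ => h1 i), Finset.sum_const_zero, zero_add]
  refine Finset.sum_congr rfl fun j _ => ?_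
  rw [Fin.append_right]

lemma padL_inj {v1 v2 : ℕ} : Function.Injective (padL (v1 := v1) (v2 := v2)) := by
  intro x y h
  funext i
  have := congrFun h (Fin.castAdd v2 i)
  rwa [padL, padL, Fin.append_left, Fin.append_left] at this

lemma padR_inj {v1 v2 : ℕ} : Function.Injective (padR (v1 := v1) (v2 := v2)) := by
  intro x y h
  funext j
  have := congrFun h (Fin.natAdd v1 j)
  rwa [padR, padR, Fin.append_right, Fin.append_right] at this

lemma padL_ne_padR {v1 v2 : ℕ} {x : Vec v1} (hx : x ≠ 0) (y : Vec v2) :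
    padL (v2 := v2) x ≠ padR y := by
  intro h
  apply hx
  funext i
  have := congrFun h (Fin.castAdd v2 i)
  rw [padL, padR, Fin.append_left, Fin.append_left] at this
  simpa using this

lemma good_sum {v1 v2 : ℕ} {X1 : Finset (Vec v1)} {X2 : Finset (Vec v2)}
    (h1 : Good v1 X1) (h2 : Good v2 X2) :
    ∃ X : Finset (Vec (v1 + v2)), Good (v1 + v2) X ∧ X.card = X1.card + X2.card := by
  classical
  set X : Finset (Vec (v1 + v2)) := X1.image padL ∪ X2.image padR with hX
  have hdisj : Disjoint (X1.image padL) (X2.image (padR (v1 := v1))) := by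
    rw [Finset.disjoint_left]
    intro z hz1 hz2
    rw [Finset.mem_image] at hz1 hz2
    obtain ⟨x, hx, rfl⟩ := hz1
    obtain ⟨y, hy, hzy⟩ := hz2
    exact padL_ne_padR (h1.1 x hx) y hzy.symm
  have hcard : X.card = X1.card + X2.card := by
    rw [hX, Finset.card_union_of_disjoint hdisj,
      Finset.card_image_of_injective _ padL_inj,
      Finset.card_image_of_injective _ padR_inj]
  refine ⟨X, ⟨?_, ?_⟩, hcard⟩
  · intro z hz
    rw [hX, Finset.mem_union, Finset.mem_image, Finset.mem_image] at hz
    rcases hz with ⟨x, hx, rfl⟩ | ⟨y, hy, rfl⟩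
    · intro h0
      apply h1.1 x hx
      funext i
      have := congrFun h0 (Fin.castAdd v2 i)
      rw [padL, Fin.append_left] at this
      simpa using this
    · intro h0
      apply h2.1 y hy
      funext j
      have := congrFun h0 (Fin.natAdd v1 j)
      rw [padR, Fin.append_right] at this
      simpa using this
  · intro a
    have hsplit : Wt X a = Wt X1 (fun i => a (Fin.castAdd v2 i)) +
        Wt X2 (fun j => a (Fin.natAdd v1 j)) := by
      unfold Wt
      rw [hX, Finset.filter_union,
        Finset.card_union_of_disjoint (Finset.disjoint_filter_filter hdisj),
        Finset.filter_image, Finset.filter_image,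
        Finset.card_image_of_injective _ padL_inj,
        Finset.card_image_of_injective _ padR_inj]
      congr 1
      · apply congrArg
        apply Finset.filter_congr
        intro x _
        rw [dot_padL]
      · apply congrArg
        apply Finset.filter_congr
        intro y _
        rw [dot_padR]
    rw [hsplit]
    exact dvd_add (h1.2 _) (h2.2 _)

/-! ### All admissible cardinalities are realized -/

lemma exists_good : ∀ n : ℕ, (n = 7 ∨ n = 8 ∨ 14 ≤ n) →
    ∃ (w : ℕ) (X : Finset (Vec w)), 2 ≤ w ∧ Good w X ∧ X.card = n := by
  intro n
  induction n using Nat.strong_induction_on with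
  | _ n ih =>
    intro hn
    have hcase : n = 7 ∨ n = 8 ∨ n = 14 ∨ n = 15 ∨ n = 16 ∨ n = 17 ∨ n = 18 ∨ n = 19 ∨
        n = 20 ∨ 21 ≤ n := by omega
    rcases hcase with rfl | rfl | rfl | rfl | rfl | rfl | rfl | rfl | rfl | h21
    · exact ⟨3, X7, by omega, good7.1, good7.2⟩
    · exact ⟨4, X8, by omega, good8.1, good8.2⟩
    · obtain ⟨X, hg, hc⟩ := good_sum good7.1 good7.1
      exact ⟨3 + 3, X, by omega, hg, by rw [hc, good7.2]⟩
    · obtain ⟨X, hg, hc⟩ := good_sum good7.1 good8.1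
      exact ⟨3 + 4, X, by omega, hg, by rw [hc, good7.2, good8.2]⟩
    · obtain ⟨X, hg, hc⟩ := good_sum good8.1 good8.1
      exact ⟨4 + 4, X, by omega, hg, by rw [hc, good8.2]⟩
    · exact ⟨6, X17, by omega, good17.1, good17.2⟩
    · exact ⟨7, X18, by omega, good18.1, good18.2⟩
    · exact ⟨7, X19, by omega, good19.1, good19.2⟩
    · exact ⟨7, X20, by omega, good20.1, good20.2⟩
    · obtain ⟨w, Y, hw2, hgY, hcY⟩ := ih (n - 7) (by omega) (by omega)
      obtain ⟨X, hg, hc⟩ := good_sum hgY good7.1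
      exact ⟨w + 3, X, by omega, hg, by rw [hc, hcY, good7.2]; omega⟩

end FDiv

/-- Lemma 6.2: (a) a nonempty `4`-divisible set of points of `PG(v-1,2)` has cardinality
`7`, `8`, or at least `14`; (b) all these cardinalities are realized. -/
theorem four_divisible_binary_classification :
    (∀ v : ℕ, 2 ≤ v → ∀ C : Finset (Submodule (ZMod 2) (Fin v → ZMod 2)),
      IsPointSet C → C.Nonempty → DivisibleSet 4 C →
        C.card = 7 ∨ C.card = 8 ∨ 14 ≤ C.card) ∧
    (∀ n : ℕ, (n = 7 ∨ n = 8 ∨ 14 ≤ n) →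
      ∃ v : ℕ, 2 ≤ v ∧ ∃ C : Finset (Submodule (ZMod 2) (Fin v → ZMod 2)),
        IsPointSet C ∧ DivisibleSet 4 C ∧ C.card = n) := by
  constructor
  · intro v hv C hC hne hdiv
    obtain ⟨X, hgood, hcard⟩ := FDiv.good_of_divisible hv hC hdiv
    have hXne : X.Nonempty := by
      rw [← Finset.card_pos, hcard]
      exact Finset.card_pos.mpr hne
    rw [← hcard]
    exact FDiv.card_bound hv hgood.1 hgood.2 hXne
  · intro n hn
    obtain ⟨w, X, hw, hgood, hcard⟩ := FDiv.exists_good n hn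
    obtain ⟨hps, hdiv, hc⟩ := FDiv.good_toC hw hgood
    exact ⟨w, hw, FDiv.toC X, hps, hdiv, by rw [hc, hcard]⟩
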